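/- For an item j of a TBPP instance and a time τ at which j is active, let σ(j,τ) = max{ Σ_{k∈A} w_k : A ⊆ {k ≠ j : k active at τ}, Σ_{k∈A} w_k ≤ W − w_j } be the optimal value of the associated Subset Sum Problem. Define lifted weights w′ by w′_j = min over times τ at which j is active of (W − σ(j,τ)), and w′_k = w_k for k ≠ j. Then w′_j ≥ w_j, and an assignment f of items to bins is feasible for the instance with weights w if and only if it is feasible for the instance with weights w′. In particular the lifted instance has the same optimal number of bins as the original one. -/
import Mathlib


open Finset

/-- A TBPP assignment `f` is feasible for weights `w`: at every time instant and for
every bin, the total weight of the items assigned to that bin that are active at that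
time is at most `W`. -/
def TBPPFeasible {n : ℕ} {I : Type*} [DecidableEq I]
    (W : ℤ) (w : Fin n → ℤ) (s t : Fin n → ℕ) (f : Fin n → I) : Prop :=
  ∀ τ : ℕ, ∀ i : I,
    ∑ k ∈ univ.filter (fun k => f k = i ∧ s k ≤ τ ∧ τ < t k), w k ≤ W

/-- Lift-2: for each time `τ` at which item `j` is active, let `σ τ` be
the Subset Sum optimum over the items `k ≠ j` active at `τ` with capacity `W - w j`,
and let `w'j = min over such τ of (W - σ τ)`.  Then `w'j ≥ w j`, and replacing the
weight of `j` by `w'j` preserves feasibility of every assignment, hence also the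
optimal number of bins. -/
theorem tbpp_lift2_aux
    {n : ℕ} {J : Type*} [DecidableEq J]
    (W : ℤ) (w : Fin n → ℤ)
    (s t : Fin n → ℕ)
    (j : Fin n) (σ : ℕ → ℤ)
    (hσ : ∀ τ : ℕ, s j ≤ τ → τ < t j →
        IsGreatest
          {v : ℤ | ∃ A : Finset (Fin n),
            (∀ k ∈ A, k ≠ j ∧ s k ≤ τ ∧ τ < t k) ∧
            v = ∑ k ∈ A, w k ∧ v ≤ W - w j} (σ τ))
    (w'j : ℤ)
    (hw'j : IsLeast {v : ℤ | ∃ τ : ℕ, (s j ≤ τ ∧ τ < t j) ∧ v = W - σ τ} w'j)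
    (hwle : w j ≤ w'j)
    (f : Fin n → J) :
    TBPPFeasible W w s t f ↔ TBPPFeasible W (Function.update w j w'j) s t f := by
    constructor
    · intro hf τ i
      by_cases hj : j ∈ univ.filter (fun k => f k = i ∧ s k ≤ τ ∧ τ < t k)
      · -- j is in the bin at time τ
        have hjprop : f j = i ∧ s j ≤ τ ∧ τ < t j := by
          simpa using hj
        set S := univ.filter (fun k => f k = i ∧ s k ≤ τ ∧ τ < t k) with hS
        have herase : ∀ g : Fin n → ℤ,
            ∑ k ∈ S, g k = g j + ∑ k ∈ S.erase j, g k := by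
          intro g
          exact (Finset.add_sum_erase S g hj).symm
        have hAsum : ∑ k ∈ S.erase j, Function.update w j w'j k
            = ∑ k ∈ S.erase j, w k := by
          refine Finset.sum_congr rfl fun k hk => ?_
          exact Function.update_of_ne (Finset.ne_of_mem_erase hk) _ _
        -- the erased set is a candidate for subset sum
        have hfeas := hf τ i
        rw [herase w] at hfeas
        have hAle : ∑ k ∈ S.erase j, w k ≤ W - w j := by omega
        have hAprop : ∀ k ∈ S.erase j, k ≠ j ∧ s k ≤ τ ∧ τ < t k := by
          intro k hk
          have h1 := Finset.ne_of_mem_erase hk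
          have h2 := Finset.mem_of_mem_erase hk
          rw [hS, Finset.mem_filter] at h2
          exact ⟨h1, h2.2.2⟩
        have hσgt := hσ τ hjprop.2.1 hjprop.2.2
        have hAσ : ∑ k ∈ S.erase j, w k ≤ σ τ :=
          hσgt.2 ⟨S.erase j, hAprop, rfl, hAle⟩
        have hw'le : w'j ≤ W - σ τ :=
          hw'j.2 ⟨τ, ⟨hjprop.2.1, hjprop.2.2⟩, rfl⟩
        rw [herase (Function.update w j w'j), hAsum, Function.update_self]
        omega
      · refine le_of_eq_of_le (Finset.sum_congr rfl fun k hk => ?_) (hf τ i)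
        exact Function.update_of_ne (by rintro rfl; exact hj hk) _ _
    · intro hf τ i
      refine le_trans (Finset.sum_le_sum fun k _ => ?_) (hf τ i)
      by_cases hk : k = j
      · subst hk; rw [Function.update_self]; exact hwle
      · rw [Function.update_of_ne hk]

theorem tbpp_lift2
    {n : ℕ} {I : Type*} [DecidableEq I]
    (W : ℤ) (hW : 0 < W)
    (w : Fin n → ℤ) (hw : ∀ j, 0 < w j ∧ w j ≤ W)
    (s t : Fin n → ℕ) (hst : ∀ j, s j < t j)
    (j : Fin n) (σ : ℕ → ℤ)
    (hσ : ∀ τ : ℕ, s j ≤ τ → τ < t j →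
        IsGreatest
          {v : ℤ | ∃ A : Finset (Fin n),
            (∀ k ∈ A, k ≠ j ∧ s k ≤ τ ∧ τ < t k) ∧
            v = ∑ k ∈ A, w k ∧ v ≤ W - w j} (σ τ))
    (w'j : ℤ)
    (hw'j : IsLeast {v : ℤ | ∃ τ : ℕ, (s j ≤ τ ∧ τ < t j) ∧ v = W - σ τ} w'j) :
    w j ≤ w'j ∧
    (∀ f : Fin n → I,
        TBPPFeasible W w s t f ↔ TBPPFeasible W (Function.update w j w'j) s t f) ∧
    (∀ m : ℕ,
        (∃ f : Fin n → Fin m, TBPPFeasible W w s t f) ↔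
        (∃ f : Fin n → Fin m, TBPPFeasible W (Function.update w j w'j) s t f)) := by
  -- w j ≤ w'j
  have hwle : w j ≤ w'j := by
    obtain ⟨τ, ⟨hs, ht⟩, hv⟩ := hw'j.1
    have hσmem := (hσ τ hs ht).1
    obtain ⟨A, _, _, hle⟩ := hσmem
    omega
  refine ⟨hwle, fun f => tbpp_lift2_aux W w s t j σ hσ w'j hw'j hwle f, fun m => ?_⟩
  exact ⟨fun ⟨f, hf⟩ => ⟨f, (tbpp_lift2_aux W w s t j σ hσ w'j hw'j hwle f).1 hf⟩, fun ⟨f, hf⟩ => ⟨f, (tbpp_lift2_aux W w s t j σ hσ w'j hw'j hwle f).2 hf⟩⟩
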